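/- Let H be a 2-dimensional Hilbert space with a basis u = (u₁, u₂) of unit vectors, let x, y ∈ 𝔻 and let T be the linear operator on H with Tu₁ = x·u₁ and Tu₂ = y·u₂. Then ‖T‖ ≤ 1 if and only if |⟨u₁, u₂⟩|² ≤ 1 − ρ(x,y)², where ρ(x,y) = |x − y|/|1 − conj(y)x| is the pseudohyperbolic distance. -/

import Mathlib

open Complex

private lemma ident13 (x y : ℂ) : ‖1 - (starRingEnd ℂ) y * x‖^2 - ‖x - y‖^2
    = (1 - ‖x‖^2) * (1 - ‖y‖^2) := by
  simp only [Complex.sq_norm]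
  simp [Complex.normSq_apply, Complex.mul_re, Complex.mul_im, Complex.sub_re, Complex.sub_im]
  ring

private lemma quad_fwd13 (A B : ℝ) (hB : 0 < B) (C : ℂ)
    (h : ∀ a b : ℂ, 0 ≤ A*‖a‖^2 + B*‖b‖^2 + 2*((starRingEnd ℂ) a * b * C).re) :
    ‖C‖^2 ≤ A*B := by
  have key := h (B : ℂ) (-(starRingEnd ℂ) C)
  have e : ((starRingEnd ℂ) (B:ℂ) * (-(starRingEnd ℂ) C) * C) = ((-(B * ‖C‖^2) : ℝ) : ℂ) := by
    have e2 : ((‖C‖ : ℝ) : ℂ)^2 = (starRingEnd ℂ) C * C := by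
      rw [← Complex.ofReal_pow, Complex.sq_norm, ← Complex.mul_conj]
      ring
    rw [Complex.conj_ofReal]
    push_cast
    rw [e2]
    ring
  rw [e, Complex.ofReal_re] at key
  have hnB : ‖((B:ℝ) : ℂ)‖ = B := by simp [abs_of_pos hB]
  have hnC : ‖-(starRingEnd ℂ) C‖ = ‖C‖ := by simp
  rw [hnB, hnC] at key
  nlinarith [norm_nonneg C]

private lemma quad_bwd13 (A B : ℝ) (hA : 0 < A) (hB : 0 < B) (C : ℂ) (h : ‖C‖^2 ≤ A*B)
    (a b : ℂ) : 0 ≤ A*‖a‖^2 + B*‖b‖^2 + 2*((starRingEnd ℂ) a * b * C).re := by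
  have h1 : -(‖a‖ * ‖b‖ * ‖C‖) ≤ ((starRingEnd ℂ) a * b * C).re := by
    have h3 := Complex.abs_re_le_norm ((starRingEnd ℂ) a * b * C)
    rw [abs_le] at h3
    have h2 : ‖(starRingEnd ℂ) a * b * C‖ = ‖a‖ * ‖b‖ * ‖C‖ := by
      simp [map_mul]
    linarith [h3.1, h2 ▸ h3.1]
  nlinarith [norm_nonneg a, norm_nonneg b, norm_nonneg C,
    sq_nonneg (A*‖a‖^2 - B*‖b‖^2),
    mul_le_mul_of_nonneg_right h (sq_nonneg (‖a‖*‖b‖)),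
    mul_nonneg (mul_nonneg (norm_nonneg a) (norm_nonneg b)) (norm_nonneg C),
    mul_nonneg hA.le (sq_nonneg ‖a‖), mul_nonneg hB.le (sq_nonneg ‖b‖)]

theorem stmt_13 {H : Type} [NormedAddCommGroup H] [InnerProductSpace ℂ H]
    (hdim : Module.finrank ℂ H = 2)
    (u₁ u₂ : H) (hu₁ : ‖u₁‖ = 1) (hu₂ : ‖u₂‖ = 1)
    (hind : LinearIndependent ℂ ![u₁, u₂])
    (x y : ℂ) (hx : ‖x‖ < 1) (hy : ‖y‖ < 1)
    (T : H →L[ℂ] H) (hT₁ : T u₁ = x • u₁) (hT₂ : T u₂ = y • u₂) :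
    ‖T‖ ≤ 1 ↔
      ‖(inner ℂ u₁ u₂ : ℂ)‖ ^ 2 ≤ 1 - (‖x - y‖ / ‖1 - (starRingEnd ℂ) y * x‖) ^ 2 := by
  have hA : (0:ℝ) < 1 - ‖x‖^2 := by nlinarith [norm_nonneg x]
  have hB : (0:ℝ) < 1 - ‖y‖^2 := by nlinarith [norm_nonneg y]
  set s : ℂ := (inner ℂ u₁ u₂ : ℂ) with hs
  set C : ℂ := s * (1 - (starRingEnd ℂ) x * y) with hC
  -- norm of C
  have hconjD : (1 - (starRingEnd ℂ) x * y) = (starRingEnd ℂ) (1 - (starRingEnd ℂ) y * x) := by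
    rw [map_sub, map_mul, Complex.conj_conj, map_one]
    ring
  have hCnorm : ‖C‖ = ‖s‖ * ‖1 - (starRingEnd ℂ) y * x‖ := by
    rw [hC, norm_mul, hconjD, RCLike.norm_conj]
  -- positivity of the denominator
  have hDpos : (0:ℝ) < ‖1 - (starRingEnd ℂ) y * x‖ := by
    have h1 : ‖(starRingEnd ℂ) y * x‖ < 1 := by
      rw [norm_mul, RCLike.norm_conj]
      nlinarith [norm_nonneg x, norm_nonneg y]
    have h2 := norm_sub_norm_le (1 : ℂ) ((starRingEnd ℂ) y * x)
    simp only [norm_one] at h2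
    linarith
  -- the RHS is equivalent to ‖C‖^2 ≤ A*B
  have hiff : (‖s‖ ^ 2 ≤ 1 - (‖x - y‖ / ‖1 - (starRingEnd ℂ) y * x‖) ^ 2)
      ↔ ‖C‖^2 ≤ (1 - ‖x‖^2) * (1 - ‖y‖^2) := by
    have hd2 : (0:ℝ) < ‖1 - (starRingEnd ℂ) y * x‖^2 := by positivity
    have hid := ident13 x y
    rw [div_pow]
    constructor
    · intro h
      have h' : ‖x-y‖^2 / ‖1 - (starRingEnd ℂ) y * x‖^2 ≤ 1 - ‖s‖^2 := by linarith
      rw [div_le_iff₀ hd2] at h'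
      have hcn : ‖C‖^2 = ‖s‖^2 * ‖1 - (starRingEnd ℂ) y * x‖^2 := by
        rw [hCnorm]; ring
      nlinarith
    · intro h
      have hcn : ‖C‖^2 = ‖s‖^2 * ‖1 - (starRingEnd ℂ) y * x‖^2 := by
        rw [hCnorm]; ring
      have h' : ‖x-y‖^2 / ‖1 - (starRingEnd ℂ) y * x‖^2 ≤ 1 - ‖s‖^2 := by
        rw [div_le_iff₀ hd2]
        nlinarith
      linarith
  -- basis
  have hcard : Fintype.card (Fin 2) = Module.finrank ℂ H := by simp [hdim]
  set bb : Module.Basis (Fin 2) ℂ H := basisOfLinearIndependentOfCardEqFinrank hind hcard with hbbdef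
  have hrepr : ∀ v : H, v = bb.repr v 0 • u₁ + bb.repr v 1 • u₂ := by
    intro v
    have h := bb.sum_repr v
    rw [Fin.sum_univ_two] at h
    have h0 : bb 0 = u₁ := by
      rw [hbbdef, coe_basisOfLinearIndependentOfCardEqFinrank]
      simp
    have h1 : bb 1 = u₂ := by
      rw [hbbdef, coe_basisOfLinearIndependentOfCardEqFinrank]
      simp
    rw [h0, h1] at h
    exact h.symm
  -- norm expansion
  have expand : ∀ a b : ℂ, ‖a • u₁ + b • u₂‖^2
      = ‖a‖^2 + ‖b‖^2 + 2*((starRingEnd ℂ) a * b * s).re := by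
    intro a b
    rw [norm_add_sq (𝕜 := ℂ)]
    rw [inner_smul_left, inner_smul_right]
    simp only [norm_smul, hu₁, hu₂, mul_one, RCLike.re_to_complex, mul_pow, ← hs]
    ring_nf
  have hTv : ∀ a b : ℂ, T (a • u₁ + b • u₂) = (a*x) • u₁ + (b*y) • u₂ := by
    intro a b
    rw [map_add, map_smul, map_smul, hT₁, hT₂, smul_smul, smul_smul]
  have key : ∀ a b : ℂ, ‖a • u₁ + b • u₂‖^2 - ‖T (a • u₁ + b • u₂)‖^2
      = (1-‖x‖^2)*‖a‖^2 + (1-‖y‖^2)*‖b‖^2 + 2*((starRingEnd ℂ) a * b * C).re := by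
    intro a b
    rw [hTv a b, expand, expand]
    have hre : ((starRingEnd ℂ) a * b * C).re
        = ((starRingEnd ℂ) a * b * s).re - ((starRingEnd ℂ) (a*x) * (b*y) * s).re := by
      rw [← Complex.sub_re]
      congr 1
      rw [map_mul, hC]
      ring
    rw [hre, norm_mul, norm_mul, mul_pow, mul_pow]
    ring
  constructor
  · intro hT
    rw [hiff]
    apply quad_fwd13 _ _ hB
    intro a b
    have h1 : ‖T (a • u₁ + b • u₂)‖ ≤ ‖a • u₁ + b • u₂‖ := by
      calc ‖T (a • u₁ + b • u₂)‖ ≤ ‖T‖ * ‖a • u₁ + b • u₂‖ := T.le_opNorm _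
        _ ≤ 1 * ‖a • u₁ + b • u₂‖ := by
            exact mul_le_mul_of_nonneg_right hT (norm_nonneg _)
        _ = ‖a • u₁ + b • u₂‖ := one_mul _
    have h2 := key a b
    nlinarith [norm_nonneg (T (a • u₁ + b • u₂)), norm_nonneg (a • u₁ + b • u₂)]
  · intro h
    rw [hiff] at h
    apply T.opNorm_le_bound zero_le_one
    intro v
    rw [one_mul]
    have hv := hrepr v
    rw [hv]
    have hk := key (bb.repr v 0) (bb.repr v 1)
    have hq := quad_bwd13 _ _ hA hB C h (bb.repr v 0) (bb.repr v 1)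
    nlinarith [norm_nonneg (T ((bb.repr v 0) • u₁ + (bb.repr v 1) • u₂)),
      norm_nonneg ((bb.repr v 0) • u₁ + (bb.repr v 1) • u₂)]
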